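/- Define the cuspidal angle ∠_{e/f}(x, y) = (x − y)/((fx − e)(fy − e)) for a reduced fraction e/f and real numbers x, y with x ≠ e/f ≠ y. Then the cuspidal angle is invariant under SL₂(ℤ): for γ = [[a,b],[c,d]] ∈ SL₂(ℤ) with γ(e/f) again written as a reduced fraction e'/f', we have ∠_{e'/f'}(γx, γy) = ∠_{e/f}(x, y), where γ acts by Möbius transformations γz = (az+b)/(cz+d). -/

import Mathlib

/-- The cuspidal angle `∠_{e/f}(x, y) = (x − y)/((fx − e)(fy − e))` of Definition 4.8. -/
noncomputable def cuspAngle (e f : ℤ) (x y : ℝ) : ℝ :=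
  (x - y) / (((f : ℝ) * x - e) * ((f : ℝ) * y - e))

/-- `SL₂(ℤ)`-invariance of the cuspidal angle: for `γ = [[a,b],[c,d]] ∈ SL₂(ℤ)` acting by
Möbius transformations, with `γ(e/f)` written as the reduced fraction
`(ae + bf)/(ce + df)`, one has `∠_{γ(e/f)}(γx, γy) = ∠_{e/f}(x, y)`. -/
theorem stmt14 (e f a b c d : ℤ) (x y : ℝ)
    (hred : IsCoprime e f) (hdet : a * d - b * c = 1)
    (hx : (f : ℝ) * x - e ≠ 0) (hy : (f : ℝ) * y - e ≠ 0)
    (hcx : (c : ℝ) * x + d ≠ 0) (hcy : (c : ℝ) * y + d ≠ 0) :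
    cuspAngle (a * e + b * f) (c * e + d * f)
        (((a : ℝ) * x + b) / ((c : ℝ) * x + d)) (((a : ℝ) * y + b) / ((c : ℝ) * y + d)) =
      cuspAngle e f x y := by
  have hdetR : (a : ℝ) * d - b * c = 1 := by exact_mod_cast hdet
  have h1 : ((c : ℝ) * e + d * f) * (((a : ℝ) * x + b) / ((c : ℝ) * x + d))
      - ((a : ℝ) * e + b * f) = ((f : ℝ) * x - e) / ((c : ℝ) * x + d) := by
    field_simp
    linear_combination ((f:ℝ)*x - e) * hdetR
  have h2 : ((c : ℝ) * e + d * f) * (((a : ℝ) * y + b) / ((c : ℝ) * y + d))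
      - ((a : ℝ) * e + b * f) = ((f : ℝ) * y - e) / ((c : ℝ) * y + d) := by
    field_simp
    linear_combination ((f:ℝ)*y - e) * hdetR
  have h3 : (((a : ℝ) * x + b) / ((c : ℝ) * x + d)) - (((a : ℝ) * y + b) / ((c : ℝ) * y + d))
      = (x - y) / (((c : ℝ) * x + d) * ((c : ℝ) * y + d)) := by
    rw [div_sub_div _ _ hcx hcy]
    congr 1
    linear_combination (x - y) * hdetR
  simp only [cuspAngle]
  push_cast
  rw [h1, h2, h3]
  rw [div_mul_div_comm, div_div_div_eq]
  rw [mul_comm (x - y), mul_div_mul_left _ _ (mul_ne_zero hcx hcy)]
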